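/- In the monomial expansion of the Vandermonde-type product ∏_{1 ≤ i < j ≤ r} (a_i − a_j)^{E} over ℤ[a_1,...,a_r], the coefficient of the monomial ∏_{i=1}^{r} a_i^{E(r−i)} equals 1. -/

import Mathlib

open Finsupp AddMonoidAlgebra

section vplcAux
variable {r : ℕ}

lemma vplc_lt {i j : Fin r} (hij : i < j) :
    toLex (Finsupp.single j 1 : Fin r →₀ ℕ) < toLex (Finsupp.single i 1) := by
  refine ⟨i, fun k hk => ?_, ?_⟩
  · simp [Finsupp.single_apply, (hk.trans hij).ne', hk.ne']
  · simp [Finsupp.single_apply, hij.ne']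

lemma vplc_factor_monic {i j : Fin r} (hij : i < j) :
    AddMonoidAlgebra.Monic (toLex : (Fin r →₀ ℕ) → Lex (Fin r →₀ ℕ))
      (MvPolynomial.X i - MvPolynomial.X j : MvPolynomial (Fin r) ℤ) ∧
    AddMonoidAlgebra.supDegree (toLex : (Fin r →₀ ℕ) → Lex (Fin r →₀ ℕ))
      (MvPolynomial.X i - MvPolynomial.X j : MvPolynomial (Fin r) ℤ)
      = toLex (Finsupp.single i 1) := by
  have hD : Function.Injective (toLex : (Fin r →₀ ℕ) → Lex (Fin r →₀ ℕ)) := fun _ _ h => h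
  have hrepr : (MvPolynomial.X i - MvPolynomial.X j : MvPolynomial (Fin r) ℤ)
      = AddMonoidAlgebra.single (Finsupp.single i 1) 1 + AddMonoidAlgebra.single (Finsupp.single j 1) (-1) := by
    rw [sub_eq_add_neg]
    congr 1
    rw [AddMonoidAlgebra.single_neg]
    rfl
  have hlt : AddMonoidAlgebra.supDegree (toLex : (Fin r →₀ ℕ) → Lex (Fin r →₀ ℕ))
        (AddMonoidAlgebra.single (Finsupp.single j 1) (-1) : MvPolynomial (Fin r) ℤ)
      < AddMonoidAlgebra.supDegree (toLex : (Fin r →₀ ℕ) → Lex (Fin r →₀ ℕ))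
        (AddMonoidAlgebra.single (Finsupp.single i 1) 1 : MvPolynomial (Fin r) ℤ) := by
    rw [AddMonoidAlgebra.supDegree_single_ne_zero _ (by norm_num),
        AddMonoidAlgebra.supDegree_single_ne_zero _ one_ne_zero]
    exact vplc_lt hij
  constructor
  · rw [AddMonoidAlgebra.Monic, hrepr,
      AddMonoidAlgebra.leadingCoeff_add_eq_left hlt,
      AddMonoidAlgebra.leadingCoeff_single hD]
  · rw [hrepr, AddMonoidAlgebra.supDegree_add_eq_left hlt,
      AddMonoidAlgebra.supDegree_single_ne_zero _ one_ne_zero]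

lemma vplc_prod_monic {ι : Type*} (s : Finset ι) (f : ι → MvPolynomial (Fin r) ℤ)
    (hf : ∀ i ∈ s, AddMonoidAlgebra.Monic (toLex : (Fin r →₀ ℕ) → Lex (Fin r →₀ ℕ)) (f i)) :
    AddMonoidAlgebra.Monic (toLex : (Fin r →₀ ℕ) → Lex (Fin r →₀ ℕ)) (∏ i ∈ s, f i) ∧
    AddMonoidAlgebra.supDegree (toLex : (Fin r →₀ ℕ) → Lex (Fin r →₀ ℕ)) (∏ i ∈ s, f i)
      = ∑ i ∈ s, AddMonoidAlgebra.supDegree (toLex : (Fin r →₀ ℕ) → Lex (Fin r →₀ ℕ)) (f i) := by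
  classical
  have hD : Function.Injective (toLex : (Fin r →₀ ℕ) → Lex (Fin r →₀ ℕ)) := fun _ _ h => h
  have hadd : ∀ a b : (Fin r →₀ ℕ), toLex (a + b) = toLex a + toLex b := fun _ _ => rfl
  induction s using Finset.cons_induction with
  | empty =>
      constructor
      · exact AddMonoidAlgebra.monic_one hD
      · rw [Finset.prod_empty, Finset.sum_empty, AddMonoidAlgebra.one_def,
          AddMonoidAlgebra.supDegree_single_ne_zero _ one_ne_zero]
        rfl
  | cons a s ha ih =>
      obtain ⟨ihm, ihd⟩ := ih (fun i hi => hf i (Finset.mem_cons_of_mem hi))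
      have hma := hf a (Finset.mem_cons_self a s)
      rw [Finset.prod_cons, Finset.sum_cons]
      constructor
      · exact hma.mul hD hadd ihm
      · rw [hma.supDegree_mul hD hadd (by show (0 : Lex (Fin r →₀ ℕ)) + 0 = 0; rw [add_zero]) ihm, ihd]
end vplcAux

/-- In ∏_{i<j} (a_i - a_j)^E over ℤ[a_1,...,a_r], the coefficient of the monomial
∏_i a_i^{E(r-i)} is 1. -/
theorem vandermonde_power_leading_coeff (r E : ℕ) (hE : 0 < E) :
    MvPolynomial.coeff
      (Finsupp.equivFunOnFinite.symm fun i : Fin r => E * (r - 1 - (i : ℕ)))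
      (∏ pr ∈ Finset.univ.filter (fun pr : Fin r × Fin r => pr.1 < pr.2),
        (MvPolynomial.X pr.1 - MvPolynomial.X pr.2 : MvPolynomial (Fin r) ℤ) ^ E)
    = 1 := by
  classical
  have hD : Function.Injective (toLex : (Fin r →₀ ℕ) → Lex (Fin r →₀ ℕ)) := fun _ _ h => h
  have hadd : ∀ a b : (Fin r →₀ ℕ), toLex (a + b) = toLex a + toLex b := fun _ _ => rfl
  set filt := Finset.univ.filter (fun pr : Fin r × Fin r => pr.1 < pr.2) with hfilt
  have hmem : ∀ pr ∈ filt, pr.1 < pr.2 := by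
    intro pr hpr; exact (Finset.mem_filter.mp hpr).2
  -- monicity & degree of each E-th power factor
  have hpow : ∀ pr ∈ filt,
      AddMonoidAlgebra.Monic (toLex : (Fin r →₀ ℕ) → Lex (Fin r →₀ ℕ))
        ((MvPolynomial.X pr.1 - MvPolynomial.X pr.2 : MvPolynomial (Fin r) ℤ) ^ E) ∧
      AddMonoidAlgebra.supDegree (toLex : (Fin r →₀ ℕ) → Lex (Fin r →₀ ℕ))
        ((MvPolynomial.X pr.1 - MvPolynomial.X pr.2 : MvPolynomial (Fin r) ℤ) ^ E)
        = toLex (Finsupp.single pr.1 E) := by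
    intro pr hpr
    obtain ⟨hm, hd⟩ := vplc_factor_monic (hmem pr hpr)
    refine ⟨hm.pow hadd hD, ?_⟩
    rw [hm.supDegree_pow (by rfl) hadd hD, hd]
    show E • toLex (Finsupp.single pr.1 (1 : ℕ)) = _
    exact congrArg toLex (by rw [Finsupp.smul_single, smul_eq_mul, mul_one] :
      E • Finsupp.single pr.1 (1:ℕ) = Finsupp.single pr.1 E)
  obtain ⟨hM, hdeg⟩ := vplc_prod_monic filt _ (fun pr hpr => (hpow pr hpr).1)
  -- the total degree
  have hsum : (∑ pr ∈ filt, Finsupp.single pr.1 E : Fin r →₀ ℕ)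
      = Finsupp.equivFunOnFinite.symm fun i : Fin r => E * (r - 1 - (i : ℕ)) := by
    ext k
    rw [Finsupp.finset_sum_apply]
    simp only [Finsupp.single_apply, Finsupp.coe_equivFunOnFinite_symm]
    rw [← Finset.sum_filter, Finset.sum_const, smul_eq_mul]
    have hcard : (filt.filter fun pr => pr.1 = k) =
        (Finset.Ioi k).map ⟨fun j => (k, j), fun a b h => by simpa using congrArg Prod.snd h⟩ := by
      ext ⟨a, b⟩
      simp only [hfilt, Finset.mem_filter, Finset.mem_univ, true_and, Finset.mem_map,
        Function.Embedding.coeFn_mk, Finset.mem_Ioi, Prod.mk.injEq]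
      constructor
      · rintro ⟨hab, rfl⟩; exact ⟨b, hab, rfl⟩
      · rintro ⟨j, hj, h⟩; obtain ⟨rfl, rfl⟩ := Prod.mk.inj h; exact ⟨hj, rfl⟩
    rw [hcard, Finset.card_map, Fin.card_Ioi, mul_comm]
  have hdeg' : AddMonoidAlgebra.supDegree (toLex : (Fin r →₀ ℕ) → Lex (Fin r →₀ ℕ))
      (∏ pr ∈ filt, (MvPolynomial.X pr.1 - MvPolynomial.X pr.2 : MvPolynomial (Fin r) ℤ) ^ E)
      = toLex (Finsupp.equivFunOnFinite.symm fun i : Fin r => E * (r - 1 - (i : ℕ))) := by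
    rw [hdeg, ← hsum]
    rw [Finset.sum_congr rfl (fun pr hpr => (hpow pr hpr).2)]
    exact (map_sum (⟨toLex, toLex_add⟩ :
      (Fin r →₀ ℕ) ≃+ Lex (Fin r →₀ ℕ)) _ filt).symm
  -- conclude
  rw [AddMonoidAlgebra.Monic, AddMonoidAlgebra.leadingCoeff, hdeg'] at hM
  rw [show Function.invFun (toLex : (Fin r →₀ ℕ) → Lex (Fin r →₀ ℕ))
      (toLex (Finsupp.equivFunOnFinite.symm fun i : Fin r => E * (r - 1 - (i : ℕ))))
      = Finsupp.equivFunOnFinite.symm fun i : Fin r => E * (r - 1 - (i : ℕ)) from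
    Function.leftInverse_invFun hD _] at hM
  exact hM
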